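/- Let w¹, w² ∈ R^d be two models with ‖w¹ − w²‖_2 ≤ τ, let y ∈ R^n be any response vector, and for j = 1, 2 let s^j be the M-truncated weight vectors they induce, s^j_i = min(M, 1/|⟨w^j, x_i⟩ − y_i|). Then for any covariates with ‖x_i‖_2 ≤ R_X for all i, every coordinate satisfies |s¹_i − s²_i| ≤ 2τM²R_X, and consequently ‖s¹ − s²‖_1 ≤ 2nτM²R_X. -/

import Mathlib

open MeasureTheory ProbabilityTheory Matrix

/-- Euclidean norm of a vector in `Fin k → ℝ`. -/
noncomputable def euclNorm {k : ℕ} (v : Fin k → ℝ) : ℝ := Real.sqrt (∑ j, v j ^ 2)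

/-- The `M`-truncated IRLS weight for a residual `r`, i.e. `min (1/|r|) M`,
interpreted as `M` when the residual is zero. -/
noncomputable def trWeight (M r : ℝ) : ℝ := if r = 0 then M else min (1 / |r|) M

/-- Smallest eigenvalue of a symmetric matrix, via the Rayleigh quotient. -/
noncomputable def lamMin {k : ℕ} (A : Matrix (Fin k) (Fin k) ℝ) : ℝ :=
  sInf {r : ℝ | ∃ v : Fin k → ℝ, euclNorm v = 1 ∧ r = v ⬝ᵥ A.mulVec v}

/-- Largest eigenvalue of a symmetric matrix, via the Rayleigh quotient. -/
noncomputable def lamMax {k : ℕ} (A : Matrix (Fin k) (Fin k) ℝ) : ℝ :=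
  sSup {r : ℝ | ∃ v : Fin k → ℝ, euclNorm v = 1 ∧ r = v ⬝ᵥ A.mulVec v}

/-- Operator (spectral) norm of a `d × n` real matrix. -/
noncomputable def opNorm2 {d n : ℕ} (X : Matrix (Fin d) (Fin n) ℝ) : ℝ :=
  Real.sqrt (lamMax (X * Xᵀ))

/-- Covariate matrix whose `i`-th column is the sample point `s i`. -/
def Xmat {d n : ℕ} (s : Fin n → Fin d → ℝ) : Matrix (Fin d) (Fin n) ℝ :=
  Matrix.of fun j i => s i j

/-- `X_G`: the matrix agreeing with `X` on columns in `G` and zero elsewhere. -/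
def restrictCols {d n : ℕ} (X : Matrix (Fin d) (Fin n) ℝ) (G : Finset (Fin n)) :
    Matrix (Fin d) (Fin n) ℝ :=
  Matrix.of fun j i => if i ∈ G then X j i else 0

/-- The `M`-truncated weights assigned by model `w` on data `(X, y)`. -/
noncomputable def stirWeights {d n : ℕ} (X : Matrix (Fin d) (Fin n) ℝ) (y : Fin n → ℝ)
    (M : ℝ) (w : Fin d → ℝ) : Fin n → ℝ :=
  fun i => trWeight M ((Xᵀ.mulVec w - y) i)

/-- One step of (M-truncated) IRLS: weighted least squares with the current weights. -/
noncomputable def stirStep {d n : ℕ} (X : Matrix (Fin d) (Fin n) ℝ) (y : Fin n → ℝ)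
    (M : ℝ) (w : Fin d → ℝ) : Fin d → ℝ :=
  (X * Matrix.diagonal (stirWeights X y M w) * Xᵀ)⁻¹.mulVec
    (X.mulVec fun i => stirWeights X y M w i * y i)

/-- One step of STIR-GD with step length `C`: `w - (2C/(Mn)) • X S r`. -/
noncomputable def stirGDStep {d n : ℕ} (X : Matrix (Fin d) (Fin n) ℝ) (y : Fin n → ℝ)
    (C M : ℝ) (w : Fin d → ℝ) : Fin d → ℝ :=
  w - (2 * C / (M * n)) • X.mulVec (fun i => stirWeights X y M w i * (Xᵀ.mulVec w - y) i)

/-- An execution trace of a stagewise truncated algorithm (STIR / STIR-GD):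
`wStage T` is the model at the start of stage `T`, within stage `T` the truncation
level is `η^T * M₁`, the inner loop applies `step`, and the stage ends the first time
successive iterates are within `2/(η * (η^T * M₁))` of each other. -/
def IsSTIRTrace {d : ℕ} (step : ℝ → (Fin d → ℝ) → (Fin d → ℝ))
    (M₁ η : ℝ) (w0 : Fin d → ℝ) (wStage : ℕ → Fin d → ℝ) (stageLen : ℕ → ℕ) : Prop :=
  wStage 0 = w0 ∧
  ∃ wIter : ℕ → ℕ → Fin d → ℝ,
    (∀ T, wIter T 0 = wStage T) ∧
    (∀ T t, wIter T (t + 1) = step (η ^ T * M₁) (wIter T t)) ∧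
    (∀ T, euclNorm (wIter T (stageLen T + 1) - wIter T (stageLen T)) ≤
      2 / (η * (η ^ T * M₁))) ∧
    (∀ T t, t < stageLen T →
      2 / (η * (η ^ T * M₁)) < euclNorm (wIter T (t + 1) - wIter T t)) ∧
    (∀ T, wStage (T + 1) = wIter T (stageLen T + 1))

/-- A real random variable `Z` is `R`-sub-Gaussian (ψ₂-norm at most `R`). -/
def IsSubGaussianRV {Ω : Type*} [MeasurableSpace Ω] (μ : Measure Ω) (Z : Ω → ℝ) (R : ℝ) : Prop :=
  ∀ p : ℝ, 1 ≤ p → (∫ ω, |Z ω| ^ p ∂μ) ^ (1 / p) ≤ R * Real.sqrt p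

/-- A distribution on `ℝ^d` is `R`-sub-Gaussian if all its one-dimensional marginals are. -/
def IsSubGaussianVec {d : ℕ} (D : Measure (Fin d → ℝ)) (R : ℝ) : Prop :=
  ∀ v : Fin d → ℝ, euclNorm v = 1 → IsSubGaussianRV D (fun x => v ⬝ᵥ x) R

/-- A distribution on `ℝ^d` is isotropic if `E ⟨v, x⟩² = 1` for every unit `v`. -/
def IsIsotropic {d : ℕ} (D : Measure (Fin d → ℝ)) : Prop :=
  ∀ v : Fin d → ℝ, euclNorm v = 1 → ∫ x, (v ⬝ᵥ x) ^ 2 ∂D = 1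

/-- The weighted strong convexity constant
`c = inf_{u,v unit} E_{x~D} [ min(1/|⟨u,x⟩|, 1) ⟨x,v⟩² ]`. -/
noncomputable def cWSC {d : ℕ} (D : Measure (Fin d → ℝ)) : ℝ :=
  ⨅ p : {q : (Fin d → ℝ) × (Fin d → ℝ) // euclNorm q.1 = 1 ∧ euclNorm q.2 = 1},
    ∫ x, trWeight 1 (p.1.1 ⬝ᵥ x) * (p.1.2 ⬝ᵥ x) ^ 2 ∂D

/-- The weighted strong convexity constant in the presence of dense noise:
`c_ε = inf_{0 ≤ r ≤ 1/M, u,v unit} E [ min(1/|Mr⟨u,x⟩ - Mε|, 1) ⟨x,v⟩² ]`. -/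
noncomputable def cWSCnoise {d : ℕ} (D : Measure (Fin d → ℝ)) (Dε : Measure ℝ) [SFinite Dε]
    (M : ℝ) : ℝ :=
  ⨅ p : {q : ℝ × (Fin d → ℝ) × (Fin d → ℝ) //
      0 ≤ q.1 ∧ q.1 ≤ 1 / M ∧ euclNorm q.2.1 = 1 ∧ euclNorm q.2.2 = 1},
    ∫ z : (Fin d → ℝ) × ℝ,
      trWeight 1 (M * p.1.1 * (p.1.2.1 ⬝ᵥ z.1) - M * z.2) * (p.1.2.2 ⬝ᵥ z.1) ^ 2 ∂(D.prod Dε)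

/-- The weighted Gram matrix `X_G S_G X_Gᵀ` induced by the sample `s`, the clean responses
`y_i = ⟨w*, x_i⟩`, the truncation level `M` and the model `w`. -/
noncomputable def gramG {d n : ℕ} (s : Fin n → Fin d → ℝ) (G : Finset (Fin n))
    (wstar : Fin d → ℝ) (M : ℝ) (w : Fin d → ℝ) : Matrix (Fin d) (Fin d) ℝ :=
  restrictCols (Xmat s) G *
    Matrix.diagonal (fun i => if i ∈ G then trWeight M (s i ⬝ᵥ (w - wstar)) else 0) *
    (restrictCols (Xmat s) G)ᵀ

/-- The weighted Gram matrix `X_G S_G X_Gᵀ` in the dense-noise setting, where the responses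
on good points are `y_i = ⟨w*, x_i⟩ + e_i`. -/
noncomputable def gramGnoisy {d n : ℕ} (s : Fin n → Fin d → ℝ) (e : Fin n → ℝ)
    (G : Finset (Fin n)) (wstar : Fin d → ℝ) (M : ℝ) (w : Fin d → ℝ) :
    Matrix (Fin d) (Fin d) ℝ :=
  restrictCols (Xmat s) G *
    Matrix.diagonal (fun i => if i ∈ G then trWeight M (s i ⬝ᵥ (w - wstar) - e i) else 0) *
    (restrictCols (Xmat s) G)ᵀ

/-- The scaled Huber loss `f_ε`. -/
noncomputable def huberS (ε x : ℝ) : ℝ := if |x| ≤ ε then (x ^ 2 / ε + ε) / 2 else |x|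

/-- The majorizer `g_ε(x; a)` of the scaled Huber loss. -/
noncomputable def huberMaj (ε x a : ℝ) : ℝ := (x ^ 2 / max |a| ε + max |a| ε) / 2

/-- The scaled-Huber objective `ℓ_ε(w) = (1/n) ∑ᵢ f_ε(⟨w, xᵢ⟩ - yᵢ)`. -/
noncomputable def huberObj {d n : ℕ} (X : Matrix (Fin d) (Fin n) ℝ) (y : Fin n → ℝ)
    (ε : ℝ) (w : Fin d → ℝ) : ℝ :=
  (1 / (n : ℝ)) * ∑ i, huberS ε ((Xᵀ.mulVec w - y) i)


lemma trWeight_eq_aux (M : ℝ) (hM : 0 < M) (r : ℝ) : trWeight M r = (max |r| M⁻¹)⁻¹ := by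
  unfold trWeight
  rcases eq_or_ne r 0 with h | h
  · simp [h, max_eq_right (le_of_lt (by positivity : (0:ℝ) < M⁻¹))]
  · rcases le_total |r| M⁻¹ with hle | hle
    · rw [max_eq_right hle, if_neg h, inv_inv, min_eq_right]
      rw [one_div, ← inv_inv M]
      exact inv_anti₀ (by positivity) hle
    · rw [max_eq_left hle, if_neg h, min_eq_left, one_div]
      rw [one_div, ← inv_inv M]
      exact inv_anti₀ (by simpa using hM) hle

lemma trWeight_lip_aux (M : ℝ) (hM : 0 < M) (r1 r2 : ℝ) :
    |trWeight M r1 - trWeight M r2| ≤ M ^ 2 * |r1 - r2| := by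
  rw [trWeight_eq_aux M hM, trWeight_eq_aux M hM]
  set a := max |r1| M⁻¹ with ha
  set b := max |r2| M⁻¹ with hb
  have hMi : (0:ℝ) < M⁻¹ := by positivity
  have ha0 : M⁻¹ ≤ a := le_max_right _ _
  have hb0 : M⁻¹ ≤ b := le_max_right _ _
  have hab : a⁻¹ - b⁻¹ = (b - a) / (a * b) := by
    rw [inv_sub_inv (lt_of_lt_of_le hMi ha0).ne' (lt_of_lt_of_le hMi hb0).ne']
  have hcalc : |a⁻¹ - b⁻¹| = |b - a| / (a * b) := by
    rw [hab, abs_div, abs_of_pos (by positivity : (0:ℝ) < a * b)]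
  rw [hcalc]
  have h1 : |b - a| ≤ |r1 - r2| := by
    rw [abs_sub_comm]
    calc |a - b| ≤ abs (|r1| - |r2|) := abs_max_sub_max_le_abs _ _ _
    _ ≤ |r1 - r2| := abs_abs_sub_abs_le_abs_sub _ _
  have h2 : M⁻¹ * M⁻¹ ≤ a * b := mul_le_mul ha0 hb0 (le_of_lt hMi) (by linarith)
  calc |b - a| / (a * b) ≤ |r1 - r2| / (M⁻¹ * M⁻¹) := by
        apply div_le_div₀ (abs_nonneg _) h1 (by positivity) h2
    _ = M ^ 2 * |r1 - r2| := by field_simp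

lemma dot_abs_le_aux {k : ℕ} (v u : Fin k → ℝ) :
    |v ⬝ᵥ u| ≤ euclNorm v * euclNorm u := by
  have h := Finset.sum_mul_sq_le_sq_mul_sq Finset.univ v u
  have := Real.sqrt_le_sqrt h
  rwa [Real.sqrt_sq_eq_abs, Real.sqrt_mul (by positivity)] at this

/-- **Lemma (approximation bound for truncated weights).**
If `‖w¹ - w²‖ ≤ τ` and all covariates have norm at most `R_X`, then the `M`-truncated
weights induced by the two models satisfy `|s¹ᵢ - s²ᵢ| ≤ 2 τ M² R_X` coordinatewise,
and consequently `‖s¹ - s²‖₁ ≤ 2 n τ M² R_X`. -/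
theorem irls_weight_approximation
    {d n : ℕ} (x : Fin n → Fin d → ℝ) (y : Fin n → ℝ)
    (w1 w2 : Fin d → ℝ) (τ M RX : ℝ) (hM : 0 < M)
    (hw : euclNorm (w1 - w2) ≤ τ)
    (hX : ∀ i, euclNorm (x i) ≤ RX) :
    (∀ i, |trWeight M (w1 ⬝ᵥ x i - y i) - trWeight M (w2 ⬝ᵥ x i - y i)| ≤
      2 * τ * M ^ 2 * RX) ∧
    ∑ i, |trWeight M (w1 ⬝ᵥ x i - y i) - trWeight M (w2 ⬝ᵥ x i - y i)| ≤
      2 * n * τ * M ^ 2 * RX := by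
  have hτ : 0 ≤ τ := le_trans (Real.sqrt_nonneg _) hw
  have key : ∀ i, |trWeight M (w1 ⬝ᵥ x i - y i) - trWeight M (w2 ⬝ᵥ x i - y i)| ≤
      2 * τ * M ^ 2 * RX := by
    intro i
    have hRX : 0 ≤ RX := le_trans (Real.sqrt_nonneg _) (hX i)
    have h1 := trWeight_lip_aux M hM (w1 ⬝ᵥ x i - y i) (w2 ⬝ᵥ x i - y i)
    have h2 : (w1 ⬝ᵥ x i - y i) - (w2 ⬝ᵥ x i - y i) = (w1 - w2) ⬝ᵥ x i := by
      simp [sub_dotProduct]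
    rw [h2] at h1
    have h3 : |(w1 - w2) ⬝ᵥ x i| ≤ τ * RX := by
      calc |(w1 - w2) ⬝ᵥ x i| ≤ euclNorm (w1 - w2) * euclNorm (x i) := dot_abs_le_aux _ _
        _ ≤ τ * RX := mul_le_mul hw (hX i) (Real.sqrt_nonneg _) hτ
    nlinarith [sq_nonneg M, abs_nonneg ((w1 - w2) ⬝ᵥ x i)]
  refine ⟨key, ?_⟩
  calc ∑ i, |trWeight M (w1 ⬝ᵥ x i - y i) - trWeight M (w2 ⬝ᵥ x i - y i)|
      ≤ ∑ _i : Fin n, 2 * τ * M ^ 2 * RX := Finset.sum_le_sum fun i _ => key i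
    _ = 2 * n * τ * M ^ 2 * RX := by
      rw [Finset.sum_const, Finset.card_univ, Fintype.card_fin]; ring
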